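/- Let F be a finite field of order Q, let L be a set of polynomials over F of degree less than k, and P ⊆ F² a set of points. Then the number of incidences I(L,P) satisfies I(L,P) ≤ |L||P|/Q + sqrt(|L||P|(Q + |L|k)). -/

import Mathlib

open Finset

/-- Evaluation of the polynomial with coefficient vector `c` (degree `< k`) at `x`. -/
def evalc {F : Type*} [CommSemiring F] {k : ℕ} (c : Fin k → F) (x : F) : F :=
  ∑ i : Fin k, c i * x ^ (i : ℕ)

lemma evalc_root_card {F : Type*} [Field F] [Fintype F] [DecidableEq F] {k : ℕ}
    {c : Fin k → F} (hc : c ≠ 0) :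
    (univ.filter (fun x : F => evalc c x = 0)).card ≤ k := by
  classical
  set p : Polynomial F := ∑ i : Fin k, Polynomial.C (c i) * Polynomial.X ^ (i : ℕ) with hp
  have heval : ∀ x, p.eval x = evalc c x := by
    intro x; simp [hp, evalc, Polynomial.eval_finset_sum]
  have hcoeff : ∀ i : Fin k, p.coeff i = c i := by
    intro i
    rw [hp, Polynomial.finset_sum_coeff]
    simp only [Polynomial.coeff_C_mul, Polynomial.coeff_X_pow]
    rw [Finset.sum_eq_single i]
    · simp
    · intro j _ hj
      have hne : (j : ℕ) ≠ (i : ℕ) := fun h => hj (Fin.ext h)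
      simp only [mul_ite, mul_one, mul_zero, ite_eq_right_iff]
      intro h
      exact absurd h.symm hne
    · simp
  have hpne : p ≠ 0 := by
    obtain ⟨i, hi⟩ := Function.ne_iff.mp hc
    intro h
    have := hcoeff i
    rw [h] at this
    simp at this
    exact hi this.symm
  have hdeg : p.natDegree ≤ k := by
    refine Polynomial.natDegree_sum_le_of_forall_le _ _ (fun i _ => ?_)
    refine (Polynomial.natDegree_C_mul_le _ _).trans ?_
    simpa using i.2.le
  refine le_trans ?_ hdeg
  refine Polynomial.card_le_degree_of_subset_roots (fun x hx => ?_)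
  rw [Finset.mem_val, Finset.mem_filter] at hx
  rw [Polynomial.mem_roots hpne]
  exact (heval x).trans hx.2

lemma evalc_eq_card {F : Type*} [Field F] [Fintype F] [DecidableEq F] {k : ℕ}
    {f g : Fin k → F} (hfg : f ≠ g) :
    (univ.filter (fun x : F => evalc f x = evalc g x)).card ≤ k := by
  have key : ∀ x : F, (evalc f x = evalc g x) ↔ evalc (f - g) x = 0 := by
    intro x
    have : evalc (f - g) x = evalc f x - evalc g x := by
      simp [evalc, sub_mul, Finset.sum_sub_distrib]
    rw [this, sub_eq_zero]
  simp only [key]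
  exact evalc_root_card (sub_ne_zero.mpr hfg)

theorem stmt12 {F : Type*} [Field F] [Fintype F] [DecidableEq F] (Q k : ℕ)
    (hQ : Fintype.card F = Q)
    (L : Finset (Fin k → F)) (P : Finset (F × F)) :
    ((((L ×ˢ P).filter (fun t : (Fin k → F) × (F × F) =>
          evalc t.1 t.2.1 = t.2.2)).card : ℝ)
      ≤ (L.card : ℝ) * P.card / Q
        + Real.sqrt ((L.card : ℝ) * P.card * (Q + L.card * k))) := by
  classical
  have hQpos : 0 < Q := hQ ▸ Fintype.card_pos
  set N : F × F → ℕ := fun p => (L.filter (fun f => evalc f p.1 = p.2)).card with hN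
  -- Step A : incidences = ∑ p ∈ P, N p
  have hI : ((L ×ˢ P).filter (fun t : (Fin k → F) × (F × F) =>
        evalc t.1 t.2.1 = t.2.2)).card = ∑ p ∈ P, N p := by
    rw [Finset.card_filter, Finset.sum_product_right]
    simp only [hN, Finset.card_filter]
  -- Step B : total incidences over all of F²
  have hSum : ∑ p : F × F, N p = L.card * Q := by
    simp only [hN, Finset.card_filter]
    rw [Finset.sum_comm]
    have h1 : ∀ f : Fin k → F, (∑ p : F × F, if evalc f p.1 = p.2 then 1 else 0) = Q := by
      intro f
      rw [Fintype.sum_prod_type]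
      simp [hQ]
    rw [Finset.sum_congr rfl (fun f _ => h1 f), Finset.sum_const, smul_eq_mul]
  -- Step C : second moment
  have hSq : ∑ p : F × F, (N p)^2
      = ∑ f ∈ L, ∑ g ∈ L, (univ.filter (fun x : F => evalc f x = evalc g x)).card := by
    have h2 : ∀ p : F × F, (N p)^2 = ∑ f ∈ L, ∑ g ∈ L,
        (if evalc f p.1 = p.2 then 1 else 0) * (if evalc g p.1 = p.2 then 1 else 0) := by
      intro p
      rw [sq, hN]
      simp only [Finset.card_filter]
      rw [Finset.sum_mul_sum]
    simp only [h2]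
    rw [Finset.sum_comm]
    refine Finset.sum_congr rfl (fun f _ => ?_)
    rw [Finset.sum_comm]
    refine Finset.sum_congr rfl (fun g _ => ?_)
    rw [Finset.card_filter, Fintype.sum_prod_type]
    refine Finset.sum_congr rfl (fun x _ => ?_)
    rw [Finset.sum_eq_single (evalc f x)]
    · simp [eq_comm]
    · intro y _ hy
      rw [if_neg (fun h => hy h.symm), zero_mul]
    · simp
  -- Step D : second moment bound
  have hSqle : ∑ p : F × F, (N p)^2 ≤ L.card * Q + L.card * L.card * k := by
    rw [hSq]
    calc ∑ f ∈ L, ∑ g ∈ L, (univ.filter (fun x : F => evalc f x = evalc g x)).card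
        ≤ ∑ f ∈ L, ∑ g ∈ L, ((if f = g then Q else 0) + k) := by
          refine Finset.sum_le_sum (fun f _ => Finset.sum_le_sum (fun g _ => ?_))
          by_cases hfg : f = g
          · subst hfg
            rw [if_pos rfl]
            refine le_trans (le_trans (Finset.card_filter_le _ _) ?_) (Nat.le_add_right _ _)
            exact le_of_eq (by simp [hQ])
          · rw [if_neg hfg, zero_add]
            exact evalc_eq_card hfg
      _ = L.card * Q + L.card * L.card * k := by
          have h3 : ∀ f ∈ L, ∑ g ∈ L, ((if f = g then Q else 0) + k) = Q + L.card * k := by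
            intro f hf
            rw [Finset.sum_add_distrib, Finset.sum_const, Finset.sum_ite_eq, if_pos hf,
              smul_eq_mul]
          rw [Finset.sum_congr rfl h3, Finset.sum_const, smul_eq_mul]
          ring
  -- Real part
  set m : ℝ := (L.card : ℝ) / Q with hm
  set g : F × F → ℝ := fun p => (N p : ℝ) - m with hg
  have hQR : (0:ℝ) < Q := by exact_mod_cast hQpos
  have hcardU : ((univ : Finset (F × F)).card : ℝ) = Q * Q := by
    simp [Finset.card_univ, Fintype.card_prod, hQ]
  -- ∑ g² over univ
  have hgsq : ∑ p : F × F, g p ^ 2 = (∑ p : F × F, ((N p : ℝ))^2) - (L.card : ℝ)^2 := by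
    have e1 : ∑ p : F × F, g p ^ 2
        = ∑ p : F × F, (((N p : ℝ))^2 - 2 * m * (N p : ℝ) + m^2) := by
      refine Finset.sum_congr rfl (fun p _ => ?_); rw [hg]; ring
    rw [e1, Finset.sum_add_distrib, Finset.sum_sub_distrib, Finset.sum_const, ← Finset.mul_sum,
      nsmul_eq_mul]
    have e2 : ∑ p : F × F, ((N p : ℝ)) = (L.card : ℝ) * Q := by
      rw [← Nat.cast_sum, hSum]; push_cast; ring
    rw [e2, hcardU, hm]
    field_simp
    ring
  -- Cauchy-Schwarz
  have hCS : ∑ p ∈ P, g p ≤ Real.sqrt ((P.card : ℝ) * ∑ p : F × F, g p ^ 2) := by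
    have h4 : (∑ p ∈ P, g p)^2 ≤ (P.card : ℝ) * ∑ p : F × F, g p ^ 2 := by
      have := Finset.sum_mul_sq_le_sq_mul_sq P (fun _ => (1:ℝ)) g
      simp only [one_mul, one_pow, Finset.sum_const, nsmul_eq_mul, mul_one] at this
      refine this.trans (mul_le_mul_of_nonneg_left ?_ (by positivity))
      exact Finset.sum_le_sum_of_subset_of_nonneg (Finset.subset_univ P)
        (fun _ _ _ => sq_nonneg _)
    calc ∑ p ∈ P, g p ≤ |∑ p ∈ P, g p| := le_abs_self _
      _ = Real.sqrt ((∑ p ∈ P, g p)^2) := (Real.sqrt_sq_eq_abs _).symm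
      _ ≤ _ := Real.sqrt_le_sqrt h4
  -- assemble
  have hIm : ((((L ×ˢ P).filter (fun t : (Fin k → F) × (F × F) =>
        evalc t.1 t.2.1 = t.2.2)).card : ℝ))
      = (L.card : ℝ) * P.card / Q + ∑ p ∈ P, g p := by
    rw [hI]
    push_cast
    rw [hg]
    simp only
    rw [Finset.sum_sub_distrib, Finset.sum_const, nsmul_eq_mul, hm]
    ring
  rw [hIm]
  refine add_le_add_right (hCS.trans (Real.sqrt_le_sqrt ?_)) _
  -- (P.card) * ∑ g² ≤ L.card * P.card * (Q + L.card * k)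
  rw [hgsq]
  have h5 : (∑ p : F × F, ((N p : ℝ))^2) ≤ (L.card : ℝ) * Q + L.card * L.card * k := by
    calc (∑ p : F × F, ((N p : ℝ))^2) = ((∑ p : F × F, (N p)^2 : ℕ) : ℝ) := by
          push_cast; rfl
      _ ≤ _ := by exact_mod_cast hSqle
  have hP0 : (0:ℝ) ≤ (P.card : ℝ) := Nat.cast_nonneg _
  nlinarith [mul_le_mul_of_nonneg_left h5 hP0, mul_nonneg hP0 (sq_nonneg ((L.card : ℝ)))]
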